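/- arXiv:1212.1545 — 3 statements merged into one kernel-verified Lean document; each statement's English description precedes it below -/
import Mathlib

section
/- Let 𝒜 be an abelian category. Suppose given objects x, y, q, x', y', q' and morphisms λ : x → y, ξ : y → q, χ : x → x', ε : y → y', μ : x' → y', ζ : y' → q', φ : q → q' such that ε ∘ λ = μ ∘ χ, φ ∘ ξ = ζ ∘ ε, ξ is a cokernel of λ, and ζ is a cokernel of μ. Let p : y ⊞ x' → y' be the morphism with components ε and μ (i.e. p(u,v) = ε(u) + μ(v)), and let k → y ⊞ x' be its kernel. Let P : y ⊞ x' ⊞ x → y ⊞ y' be the morphism sending (u,v,w) to (u + λ(w), ε(u) + μ(v)), and let k' → y ⊞ x' ⊞ x be its kernel. The projection y ⊞ x' ⊞ x → y ⊞ x' onto the first two summands carries k' into k, inducing a morphism ρ : k' → k. Moreover, the composite k → y ⊞ x' → y →^ξ q factors through the kernel of φ and vanishes after precomposition with ρ. Then the induced morphism coker(ρ) → ker(φ) is an isomorphism. -/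
open CategoryTheory Limits

universe v u

/-- Freyd's lemma: in an abelian category, given an exact two-row diagram
`x → y → q → 0`, `x' → y' → q' → 0` with compatible vertical maps
`χ : x ⟶ x'`, `ε : y ⟶ y'`, `φ : q ⟶ q'`, form `p = (ε, μ) : y ⊞ x' ⟶ y'` with kernel `k`,
and `P : (y ⊞ x') ⊞ x ⟶ y ⊞ y'`, `(u,v,w) ↦ (u + λ w, ε u + μ v)`, with kernel `k'`.
The projection onto the first two summands induces `ρ : k' ⟶ k`, the composite
`k ⟶ y ⊞ x' ⟶ y ⟶ q` factors through `ker φ` and vanishes after precomposition with `ρ`,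
and the induced morphism `coker ρ ⟶ ker φ` is an isomorphism. -/
theorem freyd_cokernel_kernel_iso {𝒜 : Type u} [Category.{v} 𝒜] [Abelian 𝒜]
    {x y q x' y' q' : 𝒜}
    (l : x ⟶ y) (ξ : y ⟶ q) (χ : x ⟶ x') (ε : y ⟶ y') (μ : x' ⟶ y') (ζ : y' ⟶ q')
    (φ : q ⟶ q')
    (sq₁ : l ≫ ε = χ ≫ μ) (sq₂ : ξ ≫ φ = ε ≫ ζ)
    (wξ : l ≫ ξ = 0) (hξ : Nonempty (IsColimit (CokernelCofork.ofπ ξ wξ)))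
    (wζ : μ ≫ ζ = 0) (hζ : Nonempty (IsColimit (CokernelCofork.ofπ ζ wζ))) :
    ∃ (h₁ : (kernel.ι (biprod.lift (biprod.desc biprod.fst l)
            (biprod.fst ≫ biprod.desc ε μ)) ≫ biprod.fst) ≫ biprod.desc ε μ = 0)
      (h₂ : (kernel.ι (biprod.desc ε μ) ≫ biprod.fst ≫ ξ) ≫ φ = 0)
      (h₃ : kernel.lift (biprod.desc ε μ)
              (kernel.ι (biprod.lift (biprod.desc biprod.fst l)
                (biprod.fst ≫ biprod.desc ε μ)) ≫ biprod.fst) h₁ ≫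
            kernel.lift φ (kernel.ι (biprod.desc ε μ) ≫ biprod.fst ≫ ξ) h₂ = 0),
      IsIso (cokernel.desc
        (kernel.lift (biprod.desc ε μ)
          (kernel.ι (biprod.lift (biprod.desc biprod.fst l)
            (biprod.fst ≫ biprod.desc ε μ)) ≫ biprod.fst) h₁)
        (kernel.lift φ (kernel.ι (biprod.desc ε μ) ≫ biprod.fst ≫ ξ) h₂) h₃) := by
  -- notation
  set p : y ⊞ x' ⟶ y' := biprod.desc ε μ with hp
  set P : (y ⊞ x') ⊞ x ⟶ y ⊞ y' :=
    biprod.lift (biprod.desc biprod.fst l) (biprod.fst ≫ p) with hP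
  -- exactness and epi facts from the cokernel hypotheses
  have exξ : (ShortComplex.mk l ξ wξ).Exact :=
    ShortComplex.exact_of_g_is_cokernel _ hξ.some
  have exζ : (ShortComplex.mk μ ζ wζ).Exact :=
    ShortComplex.exact_of_g_is_cokernel _ hζ.some
  have epiξ : Epi ξ := by
    have := epi_of_isColimit_cofork hξ.some
    simpa using this
  -- h₁
  have h₁ : (kernel.ι P ≫ biprod.fst) ≫ p = 0 := by
    have : kernel.ι P ≫ P ≫ biprod.snd = 0 := by
      rw [← Category.assoc, kernel.condition, zero_comp]
    simpa [hP] using this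
  -- basic identity: the kernel of p kills `fst ≫ ε + snd ≫ μ`
  have kerp : kernel.ι p ≫ biprod.fst ≫ ε + kernel.ι p ≫ biprod.snd ≫ μ = 0 := by
    have this : kernel.ι p ≫ biprod.desc ε μ = 0 := kernel.condition p
    rw [biprod.desc_eq] at this
    simpa [Preadditive.comp_add] using this
  have h₂ : (kernel.ι p ≫ biprod.fst ≫ ξ) ≫ φ = 0 := by
    have : kernel.ι p ≫ biprod.fst ≫ ε ≫ ζ = 0 := by
      have := congrArg (· ≫ ζ) kerp
      simpa [Preadditive.add_comp, Category.assoc, reassoc_of% wζ, wζ] using this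
    calc (kernel.ι p ≫ biprod.fst ≫ ξ) ≫ φ
        = kernel.ι p ≫ biprod.fst ≫ (ξ ≫ φ) := by simp
      _ = kernel.ι p ≫ biprod.fst ≫ ε ≫ ζ := by rw [sq₂]
      _ = 0 := this
  -- the kernel of P kills `fst ≫ fst + snd ≫ l`
  have kerP : kernel.ι P ≫ biprod.fst ≫ (biprod.fst : y ⊞ x' ⟶ y)
      + kernel.ι P ≫ biprod.snd ≫ l = 0 := by
    have hPfst : P ≫ biprod.fst = biprod.desc biprod.fst l := biprod.lift_fst _ _
    have this : kernel.ι P ≫ biprod.desc biprod.fst l = 0 := by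
      rw [← hPfst, ← Category.assoc, kernel.condition, zero_comp]
    rw [biprod.desc_eq] at this
    simpa [Preadditive.comp_add] using this
  set ρ : kernel P ⟶ kernel p := kernel.lift p (kernel.ι P ≫ biprod.fst) h₁ with hρ
  set θ : kernel p ⟶ kernel φ :=
    kernel.lift φ (kernel.ι p ≫ biprod.fst ≫ ξ) h₂ with hθ
  have h₃ : ρ ≫ θ = 0 := by
    rw [← cancel_mono (kernel.ι φ)]
    have : kernel.ι P ≫ biprod.fst ≫ biprod.fst ≫ ξ = 0 := by
      have := congrArg (· ≫ ξ) kerP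
      simpa [Preadditive.add_comp, Category.assoc, wξ, reassoc_of% wξ] using this
    simp only [hρ, hθ, Category.assoc, kernel.lift_ι, zero_comp,
      kernel.lift_ι_assoc]
    simpa using this
  refine ⟨h₁, h₂, h₃, ?_⟩
  set δ := cokernel.desc ρ θ h₃ with hδ
  -- δ is epi, since θ is epi
  have epiθ : Epi θ := by
    rw [epi_iff_surjective_up_to_refinements]
    intro A t
    obtain ⟨A₁, π₁, hπ₁, u, hu⟩ :=
      surjective_up_to_refinements_of_epi ξ (t ≫ kernel.ι φ)
    have hεζ : (u ≫ ε) ≫ ζ = 0 := by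
      have h0 : u ≫ ξ ≫ φ = 0 := by
        rw [← Category.assoc, ← hu, Category.assoc, Category.assoc,
          kernel.condition, comp_zero, comp_zero]
      rw [Category.assoc, ← sq₂]
      simpa using h0
    obtain ⟨A₂, π₂, hπ₂, v, hv⟩ := exζ.exact_up_to_refinements (u ≫ ε) hεζ
    -- build an element of kernel p
    have hsp : biprod.lift (π₂ ≫ u) (-v) ≫ p = 0 := by
      rw [hp, biprod.lift_desc]
      simp only [Preadditive.neg_comp, Category.assoc]
      rw [← hv]
      abel
    refine ⟨A₂, π₂ ≫ π₁, epi_comp _ _, kernel.lift p (biprod.lift (π₂ ≫ u) (-v)) hsp, ?_⟩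
    rw [← cancel_mono (kernel.ι φ)]
    simp only [hθ, Category.assoc, kernel.lift_ι, kernel.lift_ι_assoc,
      biprod.lift_fst_assoc]
    rw [← hu]
  have : Epi δ := by
    have fac : cokernel.π ρ ≫ δ = θ := cokernel.π_desc _ _ _
    exact epi_of_epi_fac fac
  -- δ is mono
  have : Mono δ := by
    apply Preadditive.mono_of_cancel_zero
    intro A z hz
    obtain ⟨B, π', hπ', a, ha⟩ :=
      surjective_up_to_refinements_of_epi (cokernel.π ρ) z
    have haθ : a ≫ θ = 0 := by
      have : a ≫ cokernel.π ρ ≫ δ = 0 := by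
        rw [← Category.assoc, ← ha, Category.assoc, hz, comp_zero]
      simpa [hδ] using this
    have haξ : (a ≫ kernel.ι p ≫ biprod.fst) ≫ ξ = 0 := by
      have : a ≫ θ ≫ kernel.ι φ = 0 := by rw [reassoc_of% haθ, zero_comp]
      simpa [hθ, Category.assoc] using this
    obtain ⟨C, π'', hπ'', w, hw⟩ :=
      exξ.exact_up_to_refinements (a ≫ kernel.ι p ≫ biprod.fst) haξ
    -- build an element of kernel P
    have hgP : biprod.lift (π'' ≫ a ≫ kernel.ι p) (-w) ≫ P = 0 := by
      rw [hP]
      apply biprod.hom_ext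
      · simp only [Category.assoc, biprod.lift_fst, zero_comp, biprod.lift_desc,
          Preadditive.neg_comp]
        rw [← hw]
        simp only [Category.assoc]
        abel
      · simp only [Category.assoc, biprod.lift_snd, zero_comp, biprod.lift_fst_assoc,
          kernel.condition, comp_zero]
    have key : kernel.lift P (biprod.lift (π'' ≫ a ≫ kernel.ι p) (-w)) hgP ≫ ρ
        = π'' ≫ a := by
      rw [← cancel_mono (kernel.ι p)]
      simp [hρ]
    have hz0 : (π'' ≫ π') ≫ z = 0 := by
      rw [Category.assoc, ha, ← Category.assoc, ← key, Category.assoc,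
        cokernel.condition, comp_zero]
    have epi : Epi (π'' ≫ π') := epi_comp _ _
    exact (cancel_epi (π'' ≫ π')).1 (by rw [hz0, comp_zero])
  exact isIso_of_mono_of_epi δ
end

section
/- Let k be a field and let A ⊆ k^ℕ be the k-subalgebra of eventually constant sequences. Then the power series ring A[[x]] is not a coherent ring: there exists a finitely generated ideal of A[[x]] that is not finitely presented as an A[[x]]-module. -/
universe u

/-- The `k`-subalgebra of the product algebra `k ^ ℕ` consisting of the eventually
constant (stationary) sequences. -/
def stationarySubalgebra (k : Type u) [Field k] : Subalgebra k (ℕ → k) where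
  carrier := {f | ∃ N c, ∀ n, N ≤ n → f n = c}
  mul_mem' := by
    rintro f g ⟨N, c, hf⟩ ⟨M, d, hg⟩
    exact ⟨max N M, c * d, fun n hn => by
      rw [Pi.mul_apply, hf n (le_trans (le_max_left _ _) hn),
        hg n (le_trans (le_max_right _ _) hn)]⟩
  add_mem' := by
    rintro f g ⟨N, c, hf⟩ ⟨M, d, hg⟩
    exact ⟨max N M, c + d, fun n hn => by
      rw [Pi.add_apply, hf n (le_trans (le_max_left _ _) hn),
        hg n (le_trans (le_max_right _ _) hn)]⟩
  algebraMap_mem' := fun r => ⟨0, r, fun n _ => rfl⟩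
  one_mem' := ⟨0, 1, fun n _ => rfl⟩
  zero_mem' := ⟨0, 0, fun n _ => rfl⟩

section Aux

variable (k : Type u) [Field k]

/-- Evaluation at coordinate `j`, as a ring hom from the stationary subalgebra to `k`. -/
noncomputable def stationaryEval (j : ℕ) : stationarySubalgebra k →+* k :=
  (Pi.evalRingHom (fun _ => k) j).comp (stationarySubalgebra k).val.toRingHom

@[simp] lemma stationaryEval_apply (j : ℕ) (z : stationarySubalgebra k) :
    stationaryEval k j z = (z : ℕ → k) j := rfl

/-- The key element `a = ∑ₙ δ_{2n} xⁿ` of `A[[x]]`. -/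
noncomputable def soublinElt : PowerSeries (stationarySubalgebra k) :=
  PowerSeries.mk fun n =>
    ⟨fun j => if j = 2 * n then (1 : k) else 0,
      ⟨2 * n + 1, 0, fun j hj => if_neg (by omega)⟩⟩

lemma soublinElt_coeff_apply (n : ℕ) (j : ℕ) :
    ((PowerSeries.coeff n (soublinElt k) :
      stationarySubalgebra k) : ℕ → k) j = if j = 2 * n then 1 else 0 := by
  simp [soublinElt, PowerSeries.coeff_mk]

/-- If `c * a = 0`, then the constant coefficient of `c` is eventually zero. -/
lemma soublin_ann_vanish (c : PowerSeries (stationarySubalgebra k))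
    (hca : c * soublinElt k = 0) :
    ∃ N : ℕ, ∀ j, N ≤ j →
      ((PowerSeries.constantCoeff c :
        stationarySubalgebra k) : ℕ → k) j = 0 := by
  have heven : ∀ n : ℕ,
      ((PowerSeries.constantCoeff c :
        stationarySubalgebra k) : ℕ → k) (2 * n) = 0 := by
    intro n
    set Ev : PowerSeries (stationarySubalgebra k) →+* PowerSeries k :=
      PowerSeries.map (stationaryEval k (2 * n)) with hEv
    have h0 : Ev c * Ev (soublinElt k) = 0 := by rw [← map_mul, hca, map_zero]
    have hEa : Ev (soublinElt k) ≠ 0 := by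
      intro h
      have h2 := congrArg (PowerSeries.coeff n) h
      rw [hEv] at h2
      rw [PowerSeries.coeff_map, map_zero, stationaryEval_apply,
        soublinElt_coeff_apply] at h2
      simp at h2
    have hEc : Ev c = 0 := by
      rcases mul_eq_zero.mp h0 with h | h
      · exact h
      · exact absurd h hEa
    have h3 := congrArg (PowerSeries.coeff 0) hEc
    rw [hEv, PowerSeries.coeff_map, map_zero, stationaryEval_apply,
      PowerSeries.coeff_zero_eq_constantCoeff] at h3
    exact h3
  obtain ⟨N, d, hNd⟩ :=
    (PowerSeries.constantCoeff c :
      stationarySubalgebra k).property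
  have hd : d = 0 := by
    have h1 := hNd (2 * N) (by omega)
    rw [heven N] at h1
    exact h1.symm
  exact ⟨N, fun j hj => (hNd j hj).trans hd⟩

end Aux

set_option maxHeartbeats 1000000 in
set_option synthInstance.maxHeartbeats 400000 in
/-- Soublin's example over an arbitrary field: if `A` is the algebra of eventually constant
sequences in `k ^ ℕ`, then the power series ring `A[[x]]` is not coherent: it possesses a
finitely generated ideal which is not finitely presented as an `A[[x]]`-module. -/
theorem powerSeries_stationarySubalgebra_not_coherent (k : Type u) [Field k] :
    ∃ I : Ideal (PowerSeries (stationarySubalgebra k)),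
      I.FG ∧ ¬ Module.FinitePresentation (PowerSeries (stationarySubalgebra k)) I := by
  classical
  set a : PowerSeries (stationarySubalgebra k) := soublinElt k with ha_def
  refine ⟨Ideal.span {a}, ⟨{a}, by simp⟩, ?_⟩
  intro hFP
  haveI := hFP
  have haI : a ∈ Ideal.span {a} := Ideal.subset_span rfl
  set l : PowerSeries (stationarySubalgebra k) →ₗ[PowerSeries (stationarySubalgebra k)]
      (Ideal.span {a} : Ideal (PowerSeries (stationarySubalgebra k))) :=
    LinearMap.toSpanSingleton (PowerSeries (stationarySubalgebra k)) _
      (⟨a, haI⟩ : (Ideal.span {a} : Ideal (PowerSeries (stationarySubalgebra k))))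
    with hl_def
  have hl_apply : ∀ r : PowerSeries (stationarySubalgebra k),
      ((l r : (Ideal.span {a} : Ideal (PowerSeries (stationarySubalgebra k)))) :
        PowerSeries (stationarySubalgebra k)) = r * a := fun r => rfl
  have hsurj : Function.Surjective l := by
    rintro ⟨y, hy⟩
    rw [Ideal.mem_span_singleton'] at hy
    obtain ⟨f, hf⟩ := hy
    exact ⟨f, Subtype.ext ((hl_apply f).trans hf)⟩
  have hker : (LinearMap.ker l).FG := Module.FinitePresentation.fg_ker (N := (Ideal.span {a} : Ideal (PowerSeries (stationarySubalgebra k)))) l hsurj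
  obtain ⟨s, hs⟩ := hker
  have hkermul : ∀ c ∈ LinearMap.ker l, c * a = 0 := by
    intro c hc
    have h1 : ((l c : (Ideal.span {a} : Ideal (PowerSeries (stationarySubalgebra k)))) :
        PowerSeries (stationarySubalgebra k)) = 0 :=
      congrArg _ (LinearMap.mem_ker.mp hc)
    rw [hl_apply] at h1
    exact h1
  have hvanish : ∀ c ∈ LinearMap.ker l, ∃ N : ℕ, ∀ j, N ≤ j →
      ((PowerSeries.constantCoeff c :
        stationarySubalgebra k) : ℕ → k) j = 0 := fun c hc =>
    soublin_ann_vanish k c (hkermul c hc)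
  choose! N hN using hvanish
  set j₀ : ℕ := 2 * (s.sup N) + 1 with hj₀
  have hdMem : (fun j => if j = j₀ then (1 : k) else 0) ∈ stationarySubalgebra k :=
    ⟨j₀ + 1, 0, fun j hj => if_neg (by omega)⟩
  set d : stationarySubalgebra k := ⟨_, hdMem⟩ with hd_def
  set b : PowerSeries (stationarySubalgebra k) :=
    PowerSeries.C d with hb_def
  have hba : b * a = 0 := by
    ext p j
    rw [hb_def, PowerSeries.coeff_C_mul, map_zero, MulMemClass.coe_mul,
      ZeroMemClass.coe_zero, Pi.mul_apply, Pi.zero_apply]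
    show (d : ℕ → k) j *
      ((PowerSeries.coeff p a : stationarySubalgebra k) : ℕ → k) j = 0
    rw [ha_def, soublinElt_coeff_apply]
    rw [hd_def]
    show (if j = j₀ then (1:k) else 0) * (if j = 2 * p then 1 else 0) = 0
    by_cases h : j = j₀
    · have h2 : ¬ j₀ = 2 * p := by omega
      simp [h, h2]
    · simp [h]
  have hbker : b ∈ LinearMap.ker l := by
    rw [LinearMap.mem_ker]
    apply Subtype.ext
    rw [hl_apply, hba]
    rfl
  rw [← hs] at hbker
  obtain ⟨f, -, hf⟩ := Submodule.mem_span_finset.mp hbker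
  set Φ : PowerSeries (stationarySubalgebra k) →+* k :=
    (stationaryEval k j₀).comp (PowerSeries.constantCoeff (R := stationarySubalgebra k)) with hΦ
  have hΦb : Φ b = 1 := by
    rw [hΦ, hb_def]
    show ((d : ℕ → k)) j₀ = 1
    rw [hd_def]
    show (if j₀ = j₀ then (1:k) else 0) = 1
    simp
  have hΦs : Φ (∑ c ∈ s, f c • c) = 0 := by
    rw [map_sum]
    apply Finset.sum_eq_zero
    intro c hc
    have hcker : c ∈ LinearMap.ker l := hs ▸ Submodule.subset_span hc
    have hNc : N c ≤ j₀ := by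
      have : N c ≤ s.sup N := Finset.le_sup hc
      omega
    have hc0 : Φ c = 0 := hN c hcker j₀ hNc
    rw [smul_eq_mul, map_mul, hc0, mul_zero]
  rw [hf, hΦb] at hΦs
  exact one_ne_zero hΦs
end

section
/- Let k be a commutative ring and C a small k-linear category having both finite limits and finite colimits. If the category Lex(C) of k-linear left exact functors C^op ⥤ Mod k is abelian, then C is abelian. -/
set_option linter.unusedSectionVars false


open CategoryTheory Limits Opposite

universe u

namespace DelignePaper

variable (k : Type u) [CommRing k]

/-- A presheaf `Cᵒᵖ ⥤ ModuleCat k` is `k`-linear (it acts `k`-linearly on hom-modules). -/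
def IsLinearPresheaf {C : Type u} [Category.{u} C] [Preadditive C] [Linear k C]
    (F : Cᵒᵖ ⥤ ModuleCat.{u} k) : Prop :=
  (∀ {c c' : C} (f g : c ⟶ c'), F.map (f + g).op = F.map f.op + F.map g.op) ∧
  (∀ {c c' : C} (r : k) (f : c ⟶ c'), F.map (r • f).op = r • F.map f.op)

/-- The category `Lex(C)` of `k`-linear left exact functors `Cᵒᵖ ⥤ ModuleCat k`. -/
def LexPresheafCat (C : Type u) [Category.{u} C] [Preadditive C] [Linear k C] :
    Type (u+1) :=
  ObjectProperty.FullSubcategory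
    (fun F : Cᵒᵖ ⥤ ModuleCat.{u} k => IsLinearPresheaf k F ∧ PreservesFiniteLimits F)

instance (C : Type u) [Category.{u} C] [Preadditive C] [Linear k C] :
    Category.{u} (LexPresheafCat k C) := ObjectProperty.FullSubcategory.category _

end DelignePaper

open DelignePaper

noncomputable section

namespace DelignePaperProof

/-! ### Transfer of abelianness along a fully faithful functor preserving
kernels and cokernels. -/

section Transfer

universe v₁ v₂ u₁ u₂

variable {A : Type u₁} [Category.{v₁} A] {D : Type u₂} [Category.{v₂} D]
variable [Preadditive A] [HasFiniteLimits A] [HasFiniteColimits A] [Abelian D]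
variable (L : A ⥤ D) [L.Full] [L.Faithful] [L.PreservesZeroMorphisms]

section
variable (hker : ∀ {X Y : A} (f : X ⟶ Y), PreservesLimit (parallelPair f 0) L)
variable (hcoker : ∀ {X Y : A} (f : X ⟶ Y), PreservesColimit (parallelPair f 0) L)

/-- The image of the abelian coimage under `L`. -/
def coimIso {X Y : A} (f : X ⟶ Y) :
    L.obj (Abelian.coimage f) ≅ Abelian.coimage (L.map f) :=
  letI := hker f
  letI := hcoker (kernel.ι f)
  PreservesCokernel.iso L (kernel.ι f) ≪≫
    cokernel.mapIso _ _ (PreservesKernel.iso L f) (Iso.refl _)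
      (by
        simp only [Iso.refl_hom, Category.comp_id, PreservesKernel.iso_hom]
        exact (kernelComparison_comp_ι f L).symm)

/-- The image of the abelian image under `L`. -/
def imIso {X Y : A} (f : X ⟶ Y) :
    L.obj (Abelian.image f) ≅ Abelian.image (L.map f) :=
  letI := hcoker f
  letI := hker (cokernel.π f)
  PreservesKernel.iso L (cokernel.π f) ≪≫
    kernel.mapIso _ _ (Iso.refl _) (PreservesCokernel.iso L f)
      (by
        apply (cancel_mono (PreservesCokernel.iso L f).inv).1
        simp only [Category.assoc, Iso.hom_inv_id]
        simp only [PreservesCokernel.iso_inv, Iso.refl_hom, Category.id_comp,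
          Category.comp_id]
        exact (π_comp_cokernelComparison f L).symm)

theorem map_coimageImageComparison {X Y : A} (f : X ⟶ Y) :
    Abelian.coimageImageComparison (L.map f) =
      (coimIso L hker hcoker f).inv ≫ L.map (Abelian.coimageImageComparison f) ≫
        (imIso L hker hcoker f).hom := by
  letI := hker f
  letI := hcoker f
  letI := hcoker (kernel.ι f)
  letI := hker (cokernel.π f)
  ext
  dsimp
  dsimp [imIso, coimIso, cokernel.map, kernel.mapIso, cokernel.mapIso, kernel.map]
  simp only [Abelian.coimage_image_factorisation, PreservesKernel.iso_hom, Category.assoc,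
    kernel.lift_ι, Category.comp_id, PreservesCokernel.iso_inv,
    cokernel.π_desc_assoc, Category.id_comp]
  rw [kernelComparison_comp_ι (cokernel.π f) L,
    π_comp_cokernelComparison_assoc (kernel.ι f) L,
    ← L.map_comp, ← L.map_comp]
  exact congrArg L.map (Abelian.coimage_image_factorisation f).symm

include hker hcoker in
theorem isIso_coimageImageComparison {X Y : A} (f : X ⟶ Y) :
    IsIso (Abelian.coimageImageComparison f) := by
  have h1 : L.map (Abelian.coimageImageComparison f) =
      (coimIso L hker hcoker f).hom ≫ Abelian.coimageImageComparison (L.map f) ≫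
        (imIso L hker hcoker f).inv := by
    rw [map_coimageImageComparison L hker hcoker f]
    simp
  have : IsIso (L.map (Abelian.coimageImageComparison f)) := by
    rw [h1]; infer_instance
  exact isIso_of_fully_faithful L _

end

/-- Abelianness transfers along a fully faithful functor preserving kernels and
cokernels into an abelian category. -/
def abelianOfFullyFaithful
    (hker : ∀ {X Y : A} (f : X ⟶ Y), PreservesLimit (parallelPair f 0) L)
    (hcoker : ∀ {X Y : A} (f : X ⟶ Y), PreservesColimit (parallelPair f 0) L) :
    Abelian A := by
  have : ∀ {X Y : A} (f : X ⟶ Y), IsIso (Abelian.coimageImageComparison f) :=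
    fun f => isIso_coimageImageComparison L hker hcoker f
  exact Abelian.ofCoimageImageComparisonIsIso

end Transfer

/-! ### The linear Yoneda embedding into `Lex(C)` -/

section Yoneda

variable (k : Type u) [CommRing k]
variable (C : Type u) [Category.{u} C] [Preadditive C] [Linear k C]

instance preservesLimits_linearCoyonedaObj (x : Cᵒᵖ) :
    PreservesLimits ((linearCoyoneda k C).obj x) :=
  have : PreservesLimits ((linearCoyoneda k C).obj x ⋙ forget _) :=
    (inferInstance : PreservesLimits (coyoneda.obj x))
  preservesLimits_of_reflects_of_preserves _ (forget _)

instance preservesLimits_linearYoneda : PreservesLimits (linearYoneda k C) :=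
  preservesLimits_of_evaluation _ fun x =>
    (inferInstance : PreservesLimits ((linearCoyoneda k C).obj x))

instance preservesLimits_linearYonedaObj (c : C) :
    PreservesLimits ((linearYoneda k C).obj c) :=
  have : PreservesLimits ((linearYoneda k C).obj c ⋙ forget _) :=
    (inferInstance : PreservesLimits (yoneda.obj c))
  preservesLimits_of_reflects_of_preserves _ (forget _)

theorem isLinearPresheaf_linearYonedaObj (c : C) :
    IsLinearPresheaf k ((linearYoneda k C).obj c) := by
  constructor
  · intro a b f g
    ext h
    exact Preadditive.add_comp _ _ _ _ _ _
  · intro a b r f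
    ext h
    exact Linear.smul_comp _ _ _ _ _ _

/-- The lift of the linear Yoneda embedding to `Lex(C)`. -/
def L : C ⥤ LexPresheafCat k C :=
  ObjectProperty.lift _ (linearYoneda k C)
    (fun c => ⟨isLinearPresheaf_linearYonedaObj k C c,
      PreservesLimitsOfSize.preservesFiniteLimits _⟩)

/-- The inclusion of `Lex(C)` into the functor category. -/
def ι : LexPresheafCat k C ⥤ (Cᵒᵖ ⥤ ModuleCat.{u} k) :=
  ObjectProperty.ι _

instance : (ι k C).Full := ObjectProperty.full_ι _
instance : (ι k C).Faithful := ObjectProperty.faithful_ι _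
instance : (L k C).Full :=
  have : ((L k C) ⋙ (ι k C)).Full := inferInstanceAs (linearYoneda k C).Full
  Functor.Full.of_comp_faithful (L k C) (ι k C)
instance : (L k C).Faithful :=
  have : ((L k C) ⋙ (ι k C)).Faithful := inferInstanceAs (linearYoneda k C).Faithful
  Functor.Faithful.of_comp (L k C) (ι k C)

/-- The fully faithful structure of the inclusion. -/
def ιFF : (ι k C).FullyFaithful := ObjectProperty.fullyFaithfulι _

variable {k C}

theorem L_comp_ι : L k C ⋙ ι k C = linearYoneda k C := rfl

section Abelian

variable [ab : Abelian (LexPresheafCat k C)]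

theorem ι_map_zero (A B : LexPresheafCat k C) :
    (ι k C).map (0 : A ⟶ B) = 0 := by
  have h0 : (0 : A ⟶ A) ≫ (ιFF k C).preimage (0 : (ι k C).obj A ⟶ (ι k C).obj B) =
      (0 : A ⟶ B) := zero_comp
  calc (ι k C).map (0 : A ⟶ B)
      = (ι k C).map ((0 : A ⟶ A) ≫ (ιFF k C).preimage 0) := by rw [h0]
    _ = (ι k C).map (0 : A ⟶ A) ≫ (ι k C).map ((ιFF k C).preimage 0) := by
        rw [Functor.map_comp]
    _ = (ι k C).map (0 : A ⟶ A) ≫ 0 := by rw [(ιFF k C).map_preimage]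
    _ = 0 := comp_zero

theorem ι_map_eq_zero_iff {A B : LexPresheafCat k C} (f : A ⟶ B) :
    (ι k C).map f = 0 ↔ f = 0 := by
  constructor
  · intro h
    apply (ι k C).map_injective
    rw [h, ι_map_zero]
  · rintro rfl
    exact ι_map_zero A B

instance : (L k C).PreservesZeroMorphisms where
  map_zero X Y := by
    rw [← ι_map_eq_zero_iff]
    show (linearYoneda k C).map (0 : X ⟶ Y) = 0
    ext x h
    exact Limits.comp_zero

variable [HasFiniteLimits C] [HasFiniteColimits C]

theorem L_preservesKernels {X Y : C} (f : X ⟶ Y) :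
    PreservesLimit (parallelPair f 0) (L k C) := by
  apply preservesLimit_of_preserves_limit_cone (kernelIsKernel f)
  apply isLimitOfReflects (ι k C)
  exact (isLimitOfPreserves (linearYoneda k C) (kernelIsKernel f) :)

/-! ### The Yoneda correspondence for morphisms out of representables in `Lex(C)` -/

/-- The element of `F` at `c` corresponding to a morphism `L c ⟶ F`. -/
def toElt {c : C} {F : LexPresheafCat k C} (g : (L k C).obj c ⟶ F) :
    F.obj.obj (op c) :=
  ((ι k C).map g).app (op c) (𝟙 c)

/-- The morphism `L c ⟶ F` corresponding to an element of `F` at `c`. -/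
def ofElt {c : C} {F : LexPresheafCat k C} (u : F.obj.obj (op c)) :
    (L k C).obj c ⟶ F :=
  (ιFF k C).preimage
    { app := fun x => ModuleCat.ofHom
        { toFun := fun h => F.obj.map h.op u
          map_add' := fun h h' => by
            show (F.obj.map (h + h').op) u = _
            rw [F.property.1.1 h h']; rfl
          map_smul' := fun r h => by
            show (F.obj.map (r • h).op) u = r • (F.obj.map h.op) u
            rw [F.property.1.2 r h]; rfl }
      naturality := fun x x' φ => by
        ext h
        show F.obj.map (φ.unop ≫ h).op u = F.obj.map φ (F.obj.map h.op u)
        exact congrArg (fun (m : F.obj.obj (op c) ⟶ F.obj.obj x') => m u) (F.obj.map_comp h.op φ) }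

@[simp]
theorem toElt_ofElt {c : C} {F : LexPresheafCat k C} (u : F.obj.obj (op c)) :
    toElt (ofElt u) = u := by
  dsimp only [toElt, ofElt]
  rw [(ιFF k C).map_preimage]
  show F.obj.map (𝟙 c).op u = u
  rw [op_id, F.obj.map_id]
  rfl

theorem ι_app_eq {c : C} {F : LexPresheafCat k C} (g : (L k C).obj c ⟶ F)
    (x : Cᵒᵖ) (h : x.unop ⟶ c) :
    ((ι k C).map g).app x h = F.obj.map h.op (toElt g) := by
  have hn := ((ι k C).map g).naturality h.op
  have h2 : ((ι k C).map g).app (op (unop x)) ((((ι k C).obj ((L k C).obj c)).map h.op) (𝟙 c)) =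
      F.obj.map h.op (((ι k C).map g).app (op c) (𝟙 c)) :=
    ConcreteCategory.congr_hom hn (𝟙 c)
  have h3 : (((ι k C).obj ((L k C).obj c)).map h.op) (𝟙 c) = h := by
    show h ≫ 𝟙 c = h
    rw [Category.comp_id]
  rw [h3] at h2
  exact h2

theorem ofElt_toElt {c : C} {F : LexPresheafCat k C} (g : (L k C).obj c ⟶ F) :
    ofElt (toElt g) = g := by
  apply (ι k C).map_injective
  rw [ofElt, (ιFF k C).map_preimage]
  ext x h
  exact (ι_app_eq g x h).symm

theorem toElt_injective {c : C} {F : LexPresheafCat k C} :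
    Function.Injective (toElt (c := c) (F := F)) := fun g g' h => by
  rw [← ofElt_toElt g, ← ofElt_toElt g', h]

theorem toElt_comp {c c' : C} {F : LexPresheafCat k C} (e : c' ⟶ c)
    (g : (L k C).obj c ⟶ F) :
    toElt ((L k C).map e ≫ g) = F.obj.map e.op (toElt g) := by
  have h1 : toElt ((L k C).map e ≫ g) = ((ι k C).map g).app (op c') (𝟙 c' ≫ e) := rfl
  rw [Category.id_comp] at h1
  rw [h1]
  exact ι_app_eq g (op c') e

theorem toElt_zero {c : C} {F : LexPresheafCat k C} :
    toElt (0 : (L k C).obj c ⟶ F) = 0 := by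
  dsimp only [toElt]
  rw [ι_map_zero]
  rfl

/-- `F.obj` is an additive functor, for `F` in `Lex(C)`. -/
theorem F_additive (F : LexPresheafCat k C) : F.obj.Additive := by
  constructor
  intro x y φ ψ
  have := F.property.1.1 φ.unop ψ.unop
  simpa using this

theorem exists_unique_kernelLift {X Y : C} (f : X ⟶ Y) (F : LexPresheafCat k C)
    (u : F.obj.obj (op Y)) (hu : F.obj.map f.op u = 0) :
    ∃! v : F.obj.obj (op (cokernel f)), F.obj.map (cokernel.π f).op v = u := by
  letI := F_additive F
  haveI : PreservesFiniteLimits F.obj := F.property.2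
  have hlim : IsLimit (KernelFork.ofι (cokernel.π f).op
      (show (cokernel.π f).op ≫ f.op = 0 by
        rw [← op_comp, cokernel.condition, op_zero])) :=
    CokernelCofork.IsColimit.ofπOp _ (cokernel.condition f) (cokernelIsCokernel f)
  have hlim2 := KernelFork.mapIsLimit _ hlim F.obj
  -- existence
  have ht : ModuleCat.ofHom (LinearMap.toSpanSingleton k _ u) ≫ F.obj.map f.op = 0 := by
    apply ModuleCat.hom_ext; apply LinearMap.ext; intro r
    show F.obj.map f.op (r • u) = 0
    rw [map_smul, hu, smul_zero]
  obtain ⟨l, hl⟩ := KernelFork.IsLimit.lift' hlim2 _ ht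
  have hmono : Mono (F.obj.map (cokernel.π f).op) := by
    have := mono_of_isLimit_fork hlim2
    simp only [KernelFork.map_ι, Fork.ι_ofι] at this; exact this
  have hinj : Function.Injective (F.obj.map (cokernel.π f).op) :=
    (ModuleCat.mono_iff_injective _).1 hmono
  have h1 : F.obj.map (cokernel.π f).op (l (1 : k)) = u := by
    have h2 : F.obj.map (cokernel.π f).op (l (1 : k)) = (1 : k) • u :=
      ConcreteCategory.congr_hom hl (1 : k)
    rw [one_smul] at h2
    exact h2
  refine ⟨l (1 : k), h1, fun v' hv' => ?_⟩
  apply hinj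
  rw [hv', h1]

theorem L_preservesCokernels {X Y : C} (f : X ⟶ Y) :
    PreservesColimit (parallelPair f 0) (L k C) := by
  apply preservesColimit_of_preserves_colimit_cocone (cokernelIsCokernel f)
  apply (isColimitMapCoconeCoforkEquiv' (L k C) (cokernel.condition f)).symm _
  have key : ∀ {F : LexPresheafCat k C} (g : (L k C).obj Y ⟶ F)
      (_ : (L k C).map f ≫ g = 0),
      ∃! v : F.obj.obj (op (cokernel f)),
        F.obj.map (cokernel.π f).op v = toElt g := by
    intro F g hg
    apply exists_unique_kernelLift f F (toElt g)
    rw [← toElt_comp f g, hg, toElt_zero]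
  refine CokernelCofork.IsColimit.ofπ _ _
    (fun {F} g hg => ofElt (key g hg).choose)
    (fun {F} g hg => ?_) (fun {F} g hg m hm => ?_)
  · apply toElt_injective
    rw [toElt_comp, toElt_ofElt, (key g hg).choose_spec.1]
  · apply toElt_injective
    rw [toElt_ofElt]
    exact (key g hg).choose_spec.2 (toElt m) (by show F.obj.map (cokernel.π f).op (toElt m) = toElt g; rw [← toElt_comp, hm])

end Abelian

end Yoneda

end DelignePaperProof

end

/-- If `C` is a small `k`-linear category with finite limits and finite colimits such
that the category `Lex(C)` of `k`-linear left exact functors `Cᵒᵖ ⥤ ModuleCat k` is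
abelian, then `C` itself is abelian. -/
theorem abelian_of_lexPresheafCat_abelian (k : Type u) [CommRing k]
    (C : Type u) [Category.{u} C] [Preadditive C] [Linear k C]
    [HasFiniteLimits C] [HasFiniteColimits C]
    (h : Nonempty (Abelian (LexPresheafCat k C))) :
    Nonempty (Abelian C) := by
  obtain ⟨ab⟩ := h
  exact ⟨DelignePaperProof.abelianOfFullyFaithful (DelignePaperProof.L k C)
    (fun f => DelignePaperProof.L_preservesKernels f)
    (fun f => DelignePaperProof.L_preservesCokernels f)⟩
end
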